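/- Let f : ℝ^m × ℝ^n → ℝ be twice continuously differentiable and globally μ-strongly convex–concave for some μ > 0 (H_{x,x}(x,y) ≽ μI and −H_{y,y}(x,y) ≽ μI for all (x,y)). Let x̂ : ℝ^n → ℝ^m and ŷ : ℝ^m → ℝ^n be the unique maps with ∇_x f(x̂(y), y) = 0 and ∇_y f(x, ŷ(x)) = 0 for all x, y, so that G(x,y) = f(x, ŷ(x)) − f(x̂(y), y). Then G is twice differentiable and its Hessian is block diagonal: ∇²G(x,y) = diag(G_{x,x}(x, ŷ(x)), G_{y,y}(x̂(y), y)), where G_{x,x}(x,y) = H_{x,x}(x,y) + H_{x,y}(x,y)(−H_{y,y}(x,y))^{-1}H_{y,x}(x,y) and G_{y,y}(x,y) = −H_{y,y}(x,y) + H_{y,x}(x,y)(H_{x,x}(x,y))^{-1}H_{x,y}(x,y); both G_{x,x}(x,y) and G_{y,y}(x,y) are symmetric and satisfy G_{x,x}(x,y) ≽ μI and G_{y,y}(x,y) ≽ μI. -/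

import Mathlib

open Matrix

set_option maxHeartbeats 4000000
open Matrix ContinuousLinearMap

noncomputable def D2 {E : Type*} [NormedAddCommGroup E] [NormedSpace ℝ E]
    (U : E → ℝ) (p u v : E) : ℝ := fderiv ℝ (fderiv ℝ U) p u v

section helpers
variable {E F : Type*} [NormedAddCommGroup E] [NormedSpace ℝ E]
  [NormedAddCommGroup F] [NormedSpace ℝ F]

lemma my_partial_fst (U : E × F → ℝ) (hU : Differentiable ℝ U) (x : E) (y : F) :
    fderiv ℝ (fun x' => U (x', y)) x = (fderiv ℝ U (x, y)).comp (.inl ℝ E F) :=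
  ((hU (x, y)).hasFDerivAt.comp x (hasFDerivAt_prodMk_left x y)).fderiv

lemma my_partial_snd (U : E × F → ℝ) (hU : Differentiable ℝ U) (x : E) (y : F) :
    fderiv ℝ (fun y' => U (x, y')) y = (fderiv ℝ U (x, y)).comp (.inr ℝ E F) := by
  have h : HasFDerivAt (fun y' : F => ((x, y') : E × F)) (ContinuousLinearMap.inr ℝ E F) y := by
    have h2 := HasFDerivAt.prodMk (hasFDerivAt_const (𝕜 := ℝ) x y) (hasFDerivAt_id (𝕜 := ℝ) y)
    convert h2 using 1 <;> rfl
  exact ((hU (x, y)).hasFDerivAt.comp y h).fderiv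

variable (hn21 : (1 : WithTop ℕ∞) + 1 ≤ 2)

lemma cd1 {U : E → ℝ} (hU : ContDiff ℝ 2 U) : ContDiff ℝ 1 (fderiv ℝ U) :=
  hU.fderiv_right (by norm_num)

lemma D2_symm {U : E → ℝ} (hU : ContDiff ℝ 2 U) (p u v : E) :
    D2 U p u v = D2 U p v u :=
  second_derivative_symmetric
    (fun q => ((hU.differentiable (by norm_num)) q).hasFDerivAt)
    (((cd1 hU).differentiable one_ne_zero p).hasFDerivAt) u v

lemma hasFDerivAt_fderiv_apply {U : E → ℝ} (hU : ContDiff ℝ 2 U) (q : E) (w : E) :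
    HasFDerivAt (fun q' => fderiv ℝ U q' w) ((fderiv ℝ (fderiv ℝ U) q).flip w) q := by
  have h := (((cd1 hU).differentiable one_ne_zero q).hasFDerivAt).clm_apply (hasFDerivAt_const w q)
  simpa using h

lemma D2_along {U : E → ℝ} (hU : ContDiff ℝ 2 U) {X : Type*} [NormedAddCommGroup X]
    [NormedSpace ℝ X] {c : X → E} {z : X} {J : X →L[ℝ] E} (hc : HasFDerivAt c J z)
    (w : E) (v : X) :
    fderiv ℝ (fun z' => fderiv ℝ U (c z') w) z v = D2 U (c z) (J v) w := by
  have h := (hasFDerivAt_fderiv_apply hU (c z) w).comp z hc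
  have h2 : fderiv ℝ (fun z' => fderiv ℝ U (c z') w) z
      = ((fderiv ℝ (fderiv ℝ U) (c z)).flip w).comp J := h.fderiv
  rw [h2]
  rfl

end helpers

section part2
variable {E F : Type*} [NormedAddCommGroup E] [NormedSpace ℝ E]
  [NormedAddCommGroup F] [NormedSpace ℝ F]

-- second partial identification lemmas
example {U : E × F → ℝ} (hU : ContDiff ℝ 2 U) (x : E) (y : F) (v w : E) : True := trivial

end part2

section concrete
variable {a b : ℕ}

lemma pair_sum (d : Fin b → ℝ) :
    ((0, d) : (Fin a → ℝ) × (Fin b → ℝ)) = ∑ j, d j • (((0 : Fin a → ℝ), Pi.single j (1:ℝ)) : (Fin a → ℝ) × (Fin b → ℝ)) := by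
  have h : ∑ j, d j • ((Pi.single j (1:ℝ)) : Fin b → ℝ) = d := by
    have h0 := Finset.univ_sum_single d
    rw [← h0]
    congr 1
    funext j
    ext k
    simp [Pi.single_apply]
  ext k
  · simp [Prod.fst_sum]
  · simp only [Prod.snd_sum, Prod.smul_mk, smul_zero]
    rw [h]

lemma pair_sum' (d : Fin a → ℝ) :
    ((d, 0) : (Fin a → ℝ) × (Fin b → ℝ)) = ∑ j, d j • (((Pi.single j (1:ℝ) : Fin a → ℝ), (0 : Fin b → ℝ)) : (Fin a → ℝ) × (Fin b → ℝ)) := by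
  have h : ∑ j, d j • ((Pi.single j (1:ℝ)) : Fin a → ℝ) = d := by
    have h0 := Finset.univ_sum_single d
    rw [← h0]
    congr 1
    funext j
    ext k
    simp [Pi.single_apply]
  ext k
  · simp only [Prod.fst_sum, Prod.smul_mk, smul_zero]
    rw [h]
  · simp [Prod.snd_sum]

lemma dot_nonpos {k : ℕ} (d : Fin k → ℝ) (h : d ⬝ᵥ d ≤ 0) : d = 0 := by
  have h2 : ∀ i ∈ Finset.univ, (0:ℝ) ≤ d i * d i := fun i _ => mul_self_nonneg _
  have h3 : d ⬝ᵥ d = 0 := le_antisymm h (Finset.sum_nonneg h2)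
  funext i
  have := (Finset.sum_eq_zero_iff_of_nonneg h2).mp h3 i (Finset.mem_univ i)
  exact mul_self_eq_zero.mp this

lemma dot_pos {k : ℕ} (d : Fin k → ℝ) (hd : d ≠ 0) : 0 < d ⬝ᵥ d := by
  rcases lt_or_ge 0 (d ⬝ᵥ d) with h | h
  · exact h
  · exact absurd (dot_nonpos d h) hd

end concrete

section ident
variable {E F : Type*} [NormedAddCommGroup E] [NormedSpace ℝ E]
  [NormedAddCommGroup F] [NormedSpace ℝ F]

lemma sp_ff {U : E × F → ℝ} (hU : ContDiff ℝ 2 U) (x : E) (y : F) (v w : E) :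
    fderiv ℝ (fun x' => fderiv ℝ (fun x'' => U (x'', y)) x' w) x v
      = D2 U (x, y) (v, 0) (w, 0) := by
  have h1 : (fun x' => fderiv ℝ (fun x'' => U (x'', y)) x' w)
      = fun x' => fderiv ℝ U (x', y) (w, 0) := by
    funext x'
    rw [my_partial_fst U (hU.differentiable (by norm_num)) x' y]
    rfl
  rw [h1, D2_along hU (hasFDerivAt_prodMk_left x y) ((w, 0) : E × F) v]
  rfl

lemma sp_fs {U : E × F → ℝ} (hU : ContDiff ℝ 2 U) (x : E) (y : F) (v : E) (w : F) :
    fderiv ℝ (fun x' => fderiv ℝ (fun y' => U (x', y')) y w) x v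
      = D2 U (x, y) (v, 0) (0, w) := by
  have h1 : (fun x' => fderiv ℝ (fun y' => U (x', y')) y w)
      = fun x' => fderiv ℝ U (x', y) (0, w) := by
    funext x'
    rw [my_partial_snd U (hU.differentiable (by norm_num)) x' y]
    rfl
  rw [h1, D2_along hU (hasFDerivAt_prodMk_left x y) ((0, w) : E × F) v]
  rfl

lemma hasFDerivAt_prod_mk_right' (x : E) (y : F) :
    HasFDerivAt (fun y' : F => ((x, y') : E × F)) (ContinuousLinearMap.inr ℝ E F) y := by
  have h2 := HasFDerivAt.prodMk (hasFDerivAt_const (𝕜 := ℝ) x y) (hasFDerivAt_id (𝕜 := ℝ) y)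
  convert h2 using 1 <;> rfl

lemma sp_sf {U : E × F → ℝ} (hU : ContDiff ℝ 2 U) (x : E) (y : F) (v : F) (w : E) :
    fderiv ℝ (fun y' => fderiv ℝ (fun x' => U (x', y')) x w) y v
      = D2 U (x, y) (0, v) (w, 0) := by
  have h1 : (fun y' => fderiv ℝ (fun x' => U (x', y')) x w)
      = fun y' => fderiv ℝ U (x, y') (w, 0) := by
    funext y'
    rw [my_partial_fst U (hU.differentiable (by norm_num)) x y']
    rfl
  rw [h1, D2_along hU (hasFDerivAt_prod_mk_right' x y) ((w, 0) : E × F) v]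
  rfl

lemma sp_ss {U : E × F → ℝ} (hU : ContDiff ℝ 2 U) (x : E) (y : F) (v w : F) :
    fderiv ℝ (fun y' => fderiv ℝ (fun y'' => U (x, y'')) y' w) y v
      = D2 U (x, y) (0, v) (0, w) := by
  have h1 : (fun y' => fderiv ℝ (fun y'' => U (x, y'')) y' w)
      = fun y' => fderiv ℝ U (x, y') (0, w) := by
    funext y'
    rw [my_partial_snd U (hU.differentiable (by norm_num)) x y']
    rfl
  rw [h1, D2_along hU (hasFDerivAt_prod_mk_right' x y) ((0, w) : E × F) v]
  rfl

-- bilinearity of D2 (no differentiability needed; it's a CLM applied)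
lemma D2_add_left {U : E → ℝ} (p u₁ u₂ v : E) :
    D2 U p (u₁ + u₂) v = D2 U p u₁ v + D2 U p u₂ v := by
  simp [D2]

lemma D2_sum_smul_left {U : E → ℝ} (p v : E) {ι : Type*} (s : Finset ι)
    (c : ι → ℝ) (u : ι → E) :
    D2 U p (∑ i ∈ s, c i • u i) v = ∑ i ∈ s, c i * D2 U p (u i) v := by
  simp [D2, map_sum, ContinuousLinearMap.sum_apply]

lemma D2_sum_smul_right {U : E → ℝ} (p v : E) {ι : Type*} (s : Finset ι)
    (c : ι → ℝ) (u : ι → E) :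
    D2 U p v (∑ i ∈ s, c i • u i) = ∑ i ∈ s, c i * D2 U p v (u i) := by
  simp [D2, map_sum]

end ident

theorem master {a b : ℕ} {μ : ℝ} (hμ : 0 < μ)
    (g : (Fin a → ℝ) × (Fin b → ℝ) → ℝ) (hg : ContDiff ℝ 2 g)
    (Haa : (Fin a → ℝ) → (Fin b → ℝ) → Matrix (Fin a) (Fin a) ℝ)
    (Hab : (Fin a → ℝ) → (Fin b → ℝ) → Matrix (Fin a) (Fin b) ℝ)
    (Hba : (Fin a → ℝ) → (Fin b → ℝ) → Matrix (Fin b) (Fin a) ℝ)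
    (Hbb : (Fin a → ℝ) → (Fin b → ℝ) → Matrix (Fin b) (Fin b) ℝ)
    (hHaa : ∀ u v i j, Haa u v i j = D2 g (u,v) (Pi.single i 1, 0) (Pi.single j 1, 0))
    (hHab : ∀ u v i j, Hab u v i j = D2 g (u,v) (Pi.single i 1, 0) (0, Pi.single j 1))
    (hHba : ∀ u v i j, Hba u v i j = D2 g (u,v) (0, Pi.single i 1) (Pi.single j 1, 0))
    (hHbb : ∀ u v i j, Hbb u v i j = D2 g (u,v) (0, Pi.single i 1) (0, Pi.single j 1))
    (hneg : ∀ u v (d : Fin b → ℝ), d ⬝ᵥ (Hbb u v *ᵥ d) ≤ -(μ * (d ⬝ᵥ d)))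
    (s : (Fin a → ℝ) → (Fin b → ℝ))
    (hs : ∀ u, fderiv ℝ (fun v => g (u, v)) (s u) = 0) :
    Differentiable ℝ (fun u => g (u, s u)) ∧
    (∀ u, fderiv ℝ (fun u' => g (u', s u')) u
        = (fderiv ℝ g (u, s u)).comp (ContinuousLinearMap.inl ℝ _ _)) ∧
    Differentiable ℝ (fderiv ℝ (fun u' => g (u', s u'))) ∧
    (∀ u i j, fderiv ℝ (fun u' => fderiv ℝ (fun u'' => g (u'', s u'')) u' (Pi.single j 1)) u
        (Pi.single i 1)
        = (Haa u (s u) + Hab u (s u) * (-(Hbb u (s u)))⁻¹ * Hba u (s u)) i j) := by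
  have hgd : Differentiable ℝ g := hg.differentiable (by norm_num)
  have hg1 : ContDiff ℝ 1 (fderiv ℝ g) := cd1 hg
  have hg1d : Differentiable ℝ (fderiv ℝ g) := hg1.differentiable one_ne_zero
  -- critical point property, entrywise
  have hcrit : ∀ u (w : Fin b → ℝ), fderiv ℝ g (u, s u) (0, w) = 0 := by
    intro u w
    have h1 := my_partial_snd g hgd u (s u)
    rw [hs u] at h1
    have h2 := congrArg (fun L => L w) h1.symm
    simpa using h2
  -- quadratic form expansion
  have hexp : ∀ (p : (Fin a → ℝ) × (Fin b → ℝ)) (d : Fin b → ℝ),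
      D2 g p (0, d) (0, d) = d ⬝ᵥ (Hbb p.1 p.2 *ᵥ d) := by
    intro p d
    conv_lhs => rw [pair_sum d]
    rw [D2_sum_smul_left]
    simp only [D2_sum_smul_right, Finset.mul_sum]
    simp only [dotProduct, mulVec, Finset.mul_sum, hHbb p.1 p.2]
    refine Finset.sum_congr rfl (fun i _ => Finset.sum_congr rfl (fun j _ => by ring))
  have hquad : ∀ (p : (Fin a → ℝ) × (Fin b → ℝ)) (d : Fin b → ℝ),
      D2 g p (0, d) (0, d) ≤ -(μ * (d ⬝ᵥ d)) := by
    intro p d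
    rw [hexp]
    exact hneg p.1 p.2 d
  -- uniqueness of critical points in second slot
  have huniq : ∀ (u : Fin a → ℝ) (v₁ v₂ : Fin b → ℝ),
      (∀ w, fderiv ℝ g (u, v₁) (0, w) = 0) → (∀ w, fderiv ℝ g (u, v₂) (0, w) = 0) → v₁ = v₂ := by
    intro u v₁ v₂ h1 h2
    by_contra hne
    have hdne : v₁ - v₂ ≠ 0 := sub_ne_zero.mpr hne
    set d := v₁ - v₂ with hd
    set h : ℝ → ℝ := fun t => fderiv ℝ g (u, v₂ + t • d) ((0 : Fin a → ℝ), d) with hh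
    have hpath : ∀ t : ℝ, HasDerivAt (fun t : ℝ => ((u, v₂ + t • d) : (Fin a → ℝ) × (Fin b → ℝ)))
        ((0 : Fin a → ℝ), d) t := by
      intro t
      have h3 : HasDerivAt (fun t : ℝ => v₂ + t • d) d t := by
        simpa using ((hasDerivAt_id t).smul_const d).const_add v₂
      exact (hasDerivAt_const t u).prodMk h3
    have hder : ∀ t : ℝ, HasDerivAt h (D2 g (u, v₂ + t • d) (0, d) (0, d)) t := by
      intro t
      have h4 := (hasFDerivAt_fderiv_apply hg ((u, v₂ + t • d)) ((0 : Fin a → ℝ), d)).comp_hasDerivAt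
        t (hpath t)
      simpa [D2, Function.comp_def, hh] using h4
    obtain ⟨c, _, hc⟩ := exists_hasDerivAt_eq_slope h
      (fun t => D2 g (u, v₂ + t • d) (0, d) (0, d)) one_pos
      (fun t _ => (hder t).continuousAt.continuousWithinAt)
      (fun t _ => hder t)
    have h5 : h 1 = 0 := by
      have : v₂ + (1:ℝ) • d = v₁ := by simp [hd]
      simp only [hh, this]
      exact h1 d
    have h6 : h 0 = 0 := by
      have : v₂ + (0:ℝ) • d = v₂ := by simp
      simp only [hh, this]
      exact h2 d
    rw [h5, h6] at hc
    have h7 := hquad (u, v₂ + c • d) d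
    rw [hc] at h7
    have h8 : 0 < d ⬝ᵥ d := dot_pos d hdne
    simp at h7
    nlinarith
  -- a CLM on the product vanishing against (0, basis) vanishes against (0, w)
  have hbasis0 : ∀ (L : ((Fin a → ℝ) × (Fin b → ℝ)) →L[ℝ] ℝ),
      (∀ i, L (0, Pi.single i 1) = 0) → ∀ w, L (0, w) = 0 := by
    intro L hL w
    rw [pair_sum w, map_sum]
    simp only [ContinuousLinearMap.map_smul, hL, smul_eq_mul, smul_zero]
    simp
  -- differentiability of s via the inverse function theorem
  have hsdiff : Differentiable ℝ s := by
    intro u₀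
    set p₀ : (Fin a → ℝ) × (Fin b → ℝ) := (u₀, s u₀) with hp₀
    set Ψ : (Fin a → ℝ) × (Fin b → ℝ) → (Fin a → ℝ) × (Fin b → ℝ) :=
      fun p => (p.1, fun i => fderiv ℝ g p (0, Pi.single i 1)) with hΨ
    set B := fderiv ℝ (fderiv ℝ g) p₀ with hB
    set DΨ : ((Fin a → ℝ) × (Fin b → ℝ)) →L[ℝ] ((Fin a → ℝ) × (Fin b → ℝ)) :=
      (ContinuousLinearMap.fst ℝ _ _).prod
        (ContinuousLinearMap.pi fun i => B.flip (0, Pi.single i 1)) with hDΨ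
    have hstrict : HasStrictFDerivAt Ψ DΨ p₀ := by
      apply HasStrictFDerivAt.prodMk
      · exact hasStrictFDerivAt_fst
      · apply hasStrictFDerivAt_pi''
        intro i
        have hc : HasStrictFDerivAt (fderiv ℝ g) B p₀ :=
          (hg1.contDiffAt).hasStrictFDerivAt one_ne_zero
        have h2 := hc.clm_apply
          (hasStrictFDerivAt_const (((0 : Fin a → ℝ), Pi.single i (1:ℝ))) p₀)
        convert h2 using 1
        ext z <;> simp
    have hker : ∀ z, DΨ z = 0 → z = 0 := by
      intro z hz
      have hz1 : z.1 = 0 := congrArg Prod.fst hz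
      have hz2 : ∀ i, (B (z.1, z.2)) (0, Pi.single i 1) = 0 := by
        intro i
        have h3 := congrArg (fun q => q.2 i) hz
        simpa [hDΨ] using h3
      rw [hz1] at hz2
      have hq : (B ((0 : Fin a → ℝ), z.2)) ((0 : Fin a → ℝ), z.2) = 0 :=
        hbasis0 (B ((0 : Fin a → ℝ), z.2)) hz2 z.2
      have hq2 : D2 g p₀ ((0 : Fin a → ℝ), z.2) ((0 : Fin a → ℝ), z.2) = 0 := hq
      have h7 := hquad p₀ z.2
      rw [hq2] at h7
      have h8 : z.2 ⬝ᵥ z.2 ≤ 0 := by nlinarith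
      have h9 : z.2 = 0 := dot_nonpos _ h8
      exact Prod.ext hz1 h9
    have hinj : Function.Injective DΨ := by
      intro z z' hzz
      have h0 := hker (z - z') (by rw [map_sub, hzz, sub_self])
      exact sub_eq_zero.mp h0
    have hbij : Function.Bijective (DΨ : ((Fin a → ℝ) × (Fin b → ℝ)) →ₗ[ℝ]
        ((Fin a → ℝ) × (Fin b → ℝ))) :=
      ⟨hinj, LinearMap.injective_iff_surjective.mp hinj⟩
    set eΨ : ((Fin a → ℝ) × (Fin b → ℝ)) ≃L[ℝ] ((Fin a → ℝ) × (Fin b → ℝ)) :=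
      (LinearEquiv.ofBijective (DΨ : _ →ₗ[ℝ] _) hbij).toContinuousLinearEquiv with heΨ
    have hcoe : (eΨ : ((Fin a → ℝ) × (Fin b → ℝ)) →L[ℝ] ((Fin a → ℝ) × (Fin b → ℝ))) = DΨ := by
      ext z <;> rfl
    have hstrict' : HasStrictFDerivAt Ψ (eΨ : _ →L[ℝ] _) p₀ := by
      rw [hcoe]; exact hstrict
    have hΨp₀ : Ψ p₀ = (u₀, 0) := by
      simp only [hΨ]
      refine Prod.ext rfl ?_
      funext i
      exact hcrit u₀ (Pi.single i 1)
    set linv := hstrict'.localInverse Ψ eΨ p₀ with hlinv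
    have hev0 := hstrict'.eventually_right_inverse
    rw [hΨp₀] at hev0
    have hcont : ContinuousAt (fun x : Fin a → ℝ => ((x, (0 : Fin b → ℝ)))) u₀ := by
      fun_prop
    have hev1 : ∀ᶠ x in nhds u₀, Ψ (linv (x, 0)) = (x, 0) := by
      have := hcont.tendsto
      exact this.eventually hev0
    have hev : ∀ᶠ x in nhds u₀, s x = (linv (x, 0)).2 := by
      filter_upwards [hev1] with x hx
      have hx1 : (linv (x, 0)).1 = x := congrArg Prod.fst hx
      have hx2 : ∀ i, fderiv ℝ g (linv (x, 0)) (0, Pi.single i 1) = 0 := by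
        intro i
        have := congrArg (fun q => q.2 i) hx
        simpa [hΨ] using this
      have hx3 : ∀ w, fderiv ℝ g (x, (linv (x, 0)).2) ((0 : Fin a → ℝ), w) = 0 := by
        have hrw : ((x, (linv (x, 0)).2) : (Fin a → ℝ) × (Fin b → ℝ)) = linv (x, 0) := by
          conv_rhs => rw [← Prod.mk.eta (p := linv (x, 0)), hx1]
        rw [hrw]
        exact hbasis0 _ hx2
      exact (huniq x (s x) ((linv (x, 0)).2) (fun w => hcrit x w) hx3)
    have hdl : DifferentiableAt ℝ linv (u₀, 0) := by
      have h10 := hstrict'.to_localInverse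
      rw [hΨp₀] at h10
      exact h10.differentiableAt
    have hdc : DifferentiableAt ℝ (fun x : Fin a → ℝ => (linv (x, 0)).2) u₀ := by
      have hpair : DifferentiableAt ℝ (fun x : Fin a → ℝ => ((x, (0 : Fin b → ℝ)))) u₀ :=
        (differentiableAt_id.prodMk (differentiableAt_const 0))
      exact (hdl.comp u₀ hpair).snd
    exact hdc.congr_of_eventuallyEq hev
  -- embedding u ↦ (u, s u)
  have hemb : ∀ u, HasFDerivAt (fun u' => ((u', s u') : (Fin a → ℝ) × (Fin b → ℝ)))
      ((ContinuousLinearMap.id ℝ (Fin a → ℝ)).prod (fderiv ℝ s u)) u :=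
    fun u => (hasFDerivAt_id u).prodMk (hsdiff u).hasFDerivAt
  set χ : (Fin a → ℝ) → ℝ := fun u => g (u, s u) with hχ
  have hχhas : ∀ u, HasFDerivAt χ ((fderiv ℝ g (u, s u)).comp
      ((ContinuousLinearMap.id ℝ (Fin a → ℝ)).prod (fderiv ℝ s u))) u :=
    fun u => (hgd (u, s u)).hasFDerivAt.comp u (hemb u)
  have hχd : Differentiable ℝ χ := fun u => (hχhas u).differentiableAt
  have hgrad : ∀ u, fderiv ℝ χ u
      = (fderiv ℝ g (u, s u)).comp (ContinuousLinearMap.inl ℝ _ _) := by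
    intro u
    rw [(hχhas u).fderiv]
    ext v
    simp only [ContinuousLinearMap.comp_apply, ContinuousLinearMap.prod_apply,
      ContinuousLinearMap.coe_id', id_eq, ContinuousLinearMap.inl_apply]
    have h1 : ((v, fderiv ℝ s u v) : (Fin a → ℝ) × (Fin b → ℝ))
        = (v, 0) + (0, fderiv ℝ s u v) := by simp
    rw [h1, map_add, hcrit u (fderiv ℝ s u v)]
    simp
  have hgradfun : fderiv ℝ χ = fun u =>
      ((ContinuousLinearMap.compL ℝ (Fin a → ℝ) ((Fin a → ℝ) × (Fin b → ℝ)) ℝ).flip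
        (ContinuousLinearMap.inl ℝ _ _)) (fderiv ℝ g (u, s u)) := by
    funext u
    rw [hgrad u]
    rfl
  have hχfd : Differentiable ℝ (fderiv ℝ χ) := by
    rw [hgradfun]
    exact (ContinuousLinearMap.differentiable _).comp (hg1d.comp (differentiable_id.prodMk hsdiff))
  -- differentiating the critical identity
  have hrel : ∀ u (v : Fin a → ℝ) (i : Fin b),
      D2 g (u, s u) (v, fderiv ℝ s u v) ((0 : Fin a → ℝ), Pi.single i 1) = 0 := by
    intro u v i
    have hz : (fun u' => fderiv ℝ g (u', s u') ((0 : Fin a → ℝ), Pi.single i 1))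
        = fun _ => (0:ℝ) := funext fun u' => hcrit u' _
    have hD : HasFDerivAt (fun u' => fderiv ℝ g (u', s u') ((0 : Fin a → ℝ), Pi.single i 1))
        (((fderiv ℝ (fderiv ℝ g) (u, s u)).flip ((0 : Fin a → ℝ), Pi.single i 1)).comp
          ((ContinuousLinearMap.id ℝ (Fin a → ℝ)).prod (fderiv ℝ s u))) u := by
      have h := (hasFDerivAt_fderiv_apply hg ((u, s u)) ((0 : Fin a → ℝ), Pi.single i 1)).comp u (hemb u)
      exact h
    rw [hz] at hD
    have h0 := hD.unique (hasFDerivAt_const 0 u)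
    have h1 := congrArg (fun L => L v) h0
    simpa [D2] using h1
  -- symmetry of Hbb
  have hbbsym : ∀ u v, (Hbb u v)ᵀ = Hbb u v := by
    intro u v
    ext i j
    rw [Matrix.transpose_apply, hHbb, hHbb, D2_symm hg]
  have hbbsym_e : ∀ u v i j, Hbb u v i j = Hbb u v j i := by
    intro u v i j
    conv_lhs => rw [← hbbsym u v]
    rfl
  -- -Hbb is positive definite
  have hposdef : ∀ u v, (-(Hbb u v)).PosDef := by
    intro u v
    refine Matrix.PosDef.of_dotProduct_mulVec_pos ?_ ?_
    · show (-(Hbb u v))ᴴ = -(Hbb u v)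
      have : (-(Hbb u v))ᴴ = (-(Hbb u v))ᵀ := by
        ext i j
        simp [Matrix.conjTranspose_apply]
      rw [this, Matrix.transpose_neg, hbbsym]
    · intro d hd
      have h1 := hneg u v d
      have h2 : (0:ℝ) < d ⬝ᵥ d := dot_pos d hd
      have h3 : star d ⬝ᵥ (-(Hbb u v) *ᵥ d) = -(d ⬝ᵥ (Hbb u v *ᵥ d)) := by
        simp [Matrix.neg_mulVec]
      rw [h3]
      nlinarith
  have hdetu : ∀ u v, IsUnit (-(Hbb u v)).det :=
    fun u v => isUnit_iff_ne_zero.mpr (hposdef u v).det_pos.ne'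
  have hinvsym : ∀ u v i j, (-(Hbb u v))⁻¹ i j = (-(Hbb u v))⁻¹ j i := by
    intro u v i j
    have h1 : ((-(Hbb u v))⁻¹)ᵀ = (-(Hbb u v))⁻¹ := by
      rw [Matrix.transpose_nonsing_inv, Matrix.transpose_neg, hbbsym]
    conv_lhs => rw [← h1]
    rfl
  -- the Hessian formula
  have hess : ∀ u i j, fderiv ℝ (fun u' => fderiv ℝ χ u' (Pi.single j 1)) u (Pi.single i 1)
      = (Haa u (s u) + Hab u (s u) * (-(Hbb u (s u)))⁻¹ * Hba u (s u)) i j := by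
    intro u i j
    have hfun : (fun u' => fderiv ℝ χ u' (Pi.single j 1))
        = fun u' => fderiv ℝ g (u', s u') ((Pi.single j 1 : Fin a → ℝ), (0 : Fin b → ℝ)) := by
      funext u'
      rw [hgrad u']
      rfl
    have hD : HasFDerivAt
        (fun u' => fderiv ℝ g (u', s u') ((Pi.single j 1 : Fin a → ℝ), (0 : Fin b → ℝ)))
        (((fderiv ℝ (fderiv ℝ g) (u, s u)).flip ((Pi.single j 1 : Fin a → ℝ), 0)).comp
          ((ContinuousLinearMap.id ℝ (Fin a → ℝ)).prod (fderiv ℝ s u))) u := by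
      have h := (hasFDerivAt_fderiv_apply hg ((u, s u))
        ((Pi.single j 1 : Fin a → ℝ), (0 : Fin b → ℝ))).comp u (hemb u)
      exact h
    rw [hfun, hD.fderiv]
    set w := fderiv ℝ s u (Pi.single i 1) with hw
    have hval : (((fderiv ℝ (fderiv ℝ g) (u, s u)).flip ((Pi.single j 1 : Fin a → ℝ), 0)).comp
          ((ContinuousLinearMap.id ℝ (Fin a → ℝ)).prod (fderiv ℝ s u))) (Pi.single i 1)
        = D2 g (u, s u) (Pi.single i 1, w) (Pi.single j 1, 0) := by
      simp [D2, hw]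
    rw [hval]
    have hsplit : ((Pi.single i 1, w) : (Fin a → ℝ) × (Fin b → ℝ))
        = ((Pi.single i 1 : Fin a → ℝ), (0 : Fin b → ℝ)) + ((0 : Fin a → ℝ), w) := by simp
    rw [hsplit, D2_add_left]
    have hterm2 : D2 g (u, s u) ((0 : Fin a → ℝ), w) (Pi.single j 1, 0)
        = ∑ k, w k * Hba u (s u) k j := by
      conv_lhs => rw [pair_sum w]
      rw [D2_sum_smul_left]
      exact Finset.sum_congr rfl (fun k _ => by rw [hHba])
    have heq : ∀ k, Hab u (s u) i k + ∑ l, w l * Hbb u (s u) l k = 0 := by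
      intro k
      have h1 := hrel u (Pi.single i 1) k
      rw [hsplit, D2_add_left] at h1
      have h2 : D2 g (u, s u) ((0 : Fin a → ℝ), w) ((0 : Fin a → ℝ), Pi.single k 1)
          = ∑ l, w l * Hbb u (s u) l k := by
        conv_lhs => rw [pair_sum w]
        rw [D2_sum_smul_left]
        exact Finset.sum_congr rfl (fun l _ => by rw [hHbb])
      rw [h2, ← hHab] at h1
      exact h1
    have hmw : (-(Hbb u (s u))) *ᵥ w = (fun k => Hab u (s u) i k) := by
      funext k
      have h3 := heq k
      have h5 : ((-(Hbb u (s u))) *ᵥ w) k = -(∑ l, Hbb u (s u) k l * w l) := by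
        simp [Matrix.neg_mulVec, Matrix.mulVec, dotProduct]
      rw [h5]
      have h4 : ∑ l, Hbb u (s u) k l * w l = ∑ l, w l * Hbb u (s u) l k :=
        Finset.sum_congr rfl (fun l _ => by rw [hbbsym_e u (s u) k l]; ring)
      rw [h4]
      linarith
    have hw_eq : w = (-(Hbb u (s u)))⁻¹ *ᵥ (fun k => Hab u (s u) i k) := by
      rw [← hmw, Matrix.mulVec_mulVec, Matrix.nonsing_inv_mul _ (hdetu u (s u)),
        Matrix.one_mulVec]
    rw [hterm2]
    simp only [Matrix.add_apply, Matrix.mul_apply]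
    have hterm1 : D2 g (u, s u) ((Pi.single i 1 : Fin a → ℝ), (0 : Fin b → ℝ))
        (Pi.single j 1, 0) = Haa u (s u) i j := (hHaa u (s u) i j).symm
    rw [hterm1]
    congr 1
    rw [hw_eq]
    refine Finset.sum_congr rfl (fun k _ => ?_)
    simp only [Matrix.mulVec, dotProduct]
    congr 1
    refine Finset.sum_congr rfl (fun l _ => ?_)
    rw [hinvsym u (s u) k l]
    ring
  exact ⟨hχd, hgrad, hχfd, hess⟩

/-- For a `C²`, globally `μ`-strongly convex–concave `f` with minimizer map
`x̂` (`∇_x f(x̂(y),y) = 0`) and maximizer map `ŷ` (`∇_y f(x,ŷ(x)) = 0`), the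
suboptimality error `G(x,y) = f(x,ŷ(x)) − f(x̂(y),y)` is twice differentiable
with block-diagonal Hessian `diag(G_{x,x}(x,ŷ(x)), G_{y,y}(x̂(y),y))`, where
`G_{x,x} = H_{x,x} + H_{x,y}(−H_{y,y})⁻¹H_{y,x}` and
`G_{y,y} = −H_{y,y} + H_{y,x}(H_{x,x})⁻¹H_{x,y}`; both `G_{x,x}(x,y)` and
`G_{y,y}(x,y)` are symmetric and `≽ μI`.  The Hessian blocks `Hxx`, `Hxy`,
`Hyx`, `Hyy` of `f` are given entrywise by second partial derivatives. -/
theorem stmt_11 {m n : ℕ} (μ : ℝ) (hμ : 0 < μ)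
    (f : (Fin m → ℝ) → (Fin n → ℝ) → ℝ)
    (hf : ContDiff ℝ 2 fun p : (Fin m → ℝ) × (Fin n → ℝ) => f p.1 p.2)
    (Hxx : (Fin m → ℝ) → (Fin n → ℝ) → Matrix (Fin m) (Fin m) ℝ)
    (hHxx : ∀ x y i j, Hxx x y i j =
      fderiv ℝ (fun x' => fderiv ℝ (fun x'' => f x'' y) x' (Pi.single j 1)) x (Pi.single i 1))
    (Hxy : (Fin m → ℝ) → (Fin n → ℝ) → Matrix (Fin m) (Fin n) ℝ)
    (hHxy : ∀ x y i j, Hxy x y i j =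
      fderiv ℝ (fun x' => fderiv ℝ (fun y' => f x' y') y (Pi.single j 1)) x (Pi.single i 1))
    (Hyx : (Fin m → ℝ) → (Fin n → ℝ) → Matrix (Fin n) (Fin m) ℝ)
    (hHyx : ∀ x y i j, Hyx x y i j =
      fderiv ℝ (fun y' => fderiv ℝ (fun x' => f x' y') x (Pi.single j 1)) y (Pi.single i 1))
    (Hyy : (Fin m → ℝ) → (Fin n → ℝ) → Matrix (Fin n) (Fin n) ℝ)
    (hHyy : ∀ x y i j, Hyy x y i j =
      fderiv ℝ (fun y' => fderiv ℝ (fun y'' => f x y'') y' (Pi.single j 1)) y (Pi.single i 1))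
    (hconv : ∀ x y, (Hxx x y - μ • (1 : Matrix (Fin m) (Fin m) ℝ)).PosSemidef)
    (hconc : ∀ x y, (-(Hyy x y) - μ • (1 : Matrix (Fin n) (Fin n) ℝ)).PosSemidef)
    (xhat : (Fin n → ℝ) → (Fin m → ℝ)) (yhat : (Fin m → ℝ) → (Fin n → ℝ))
    (hxhat : ∀ y, fderiv ℝ (fun x => f x y) (xhat y) = 0)
    (hyhat : ∀ x, fderiv ℝ (fun y => f x y) (yhat x) = 0)
    (G : (Fin m → ℝ) × (Fin n → ℝ) → ℝ)
    (hG : ∀ x y, G (x, y) = f x (yhat x) - f (xhat y) y)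
    (Gxx : (Fin m → ℝ) → (Fin n → ℝ) → Matrix (Fin m) (Fin m) ℝ)
    (hGxx : ∀ x y, Gxx x y = Hxx x y + Hxy x y * (-(Hyy x y))⁻¹ * Hyx x y)
    (Gyy : (Fin m → ℝ) → (Fin n → ℝ) → Matrix (Fin n) (Fin n) ℝ)
    (hGyy : ∀ x y, Gyy x y = -(Hyy x y) + Hyx x y * (Hxx x y)⁻¹ * Hxy x y) :
    -- G is twice differentiable
    (Differentiable ℝ G ∧ Differentiable ℝ (fderiv ℝ G)) ∧
    -- the x–x block of the Hessian of G is Gxx (x, ŷ(x))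
    (∀ x y i j,
      fderiv ℝ (fun x' => fderiv ℝ (fun x'' => G (x'', y)) x' (Pi.single j 1)) x (Pi.single i 1)
        = Gxx x (yhat x) i j) ∧
    -- the off-diagonal blocks of the Hessian of G vanish
    (∀ (x : Fin m → ℝ) (y : Fin n → ℝ) (i : Fin n) (j : Fin m),
      fderiv ℝ (fun y' => fderiv ℝ (fun x' => G (x', y')) x (Pi.single j 1)) y (Pi.single i 1)
        = 0) ∧
    (∀ (x : Fin m → ℝ) (y : Fin n → ℝ) (i : Fin m) (j : Fin n),
      fderiv ℝ (fun x' => fderiv ℝ (fun y' => G (x', y')) y (Pi.single j 1)) x (Pi.single i 1)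
        = 0) ∧
    -- the y–y block of the Hessian of G is Gyy (x̂(y), y)
    (∀ x y i j,
      fderiv ℝ (fun y' => fderiv ℝ (fun y'' => G (x, y'')) y' (Pi.single j 1)) y (Pi.single i 1)
        = Gyy (xhat y) y i j) ∧
    -- symmetry and positivity of Gxx and Gyy
    (∀ x y, (Gxx x y).IsSymm ∧ (Gyy x y).IsSymm ∧
      (Gxx x y - μ • (1 : Matrix (Fin m) (Fin m) ℝ)).PosSemidef ∧
      (Gyy x y - μ • (1 : Matrix (Fin n) (Fin n) ℝ)).PosSemidef) := by
  set U : (Fin m → ℝ) × (Fin n → ℝ) → ℝ := fun p => f p.1 p.2 with hU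
  -- identification of the Hessian blocks with D2 of U
  have hxx' : ∀ x y i j, Hxx x y i j
      = D2 U (x, y) (Pi.single i 1, 0) (Pi.single j 1, 0) := by
    intro x y i j
    rw [hHxx]
    exact sp_ff hf x y (Pi.single i 1) (Pi.single j 1)
  have hxy' : ∀ x y i j, Hxy x y i j
      = D2 U (x, y) (Pi.single i 1, 0) (0, Pi.single j 1) := by
    intro x y i j
    rw [hHxy]
    exact sp_fs hf x y (Pi.single i 1) (Pi.single j 1)
  have hyx' : ∀ x y i j, Hyx x y i j
      = D2 U (x, y) (0, Pi.single i 1) (Pi.single j 1, 0) := by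
    intro x y i j
    rw [hHyx]
    exact sp_sf hf x y (Pi.single i 1) (Pi.single j 1)
  have hyy' : ∀ x y i j, Hyy x y i j
      = D2 U (x, y) (0, Pi.single i 1) (0, Pi.single j 1) := by
    intro x y i j
    rw [hHyy]
    exact sp_ss hf x y (Pi.single i 1) (Pi.single j 1)
  -- quadratic form bounds
  have hconv' : ∀ x y (d : Fin m → ℝ), μ * (d ⬝ᵥ d) ≤ d ⬝ᵥ (Hxx x y *ᵥ d) := by
    intro x y d
    have h1 := (hconv x y).dotProduct_mulVec_nonneg d
    have h2 : star d = d := by simp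
    rw [h2, Matrix.sub_mulVec, dotProduct_sub, Matrix.smul_mulVec,
      Matrix.one_mulVec, dotProduct_smul] at h1
    simp only [smul_eq_mul] at h1
    linarith
  have hconc' : ∀ x y (d : Fin n → ℝ), d ⬝ᵥ (Hyy x y *ᵥ d) ≤ -(μ * (d ⬝ᵥ d)) := by
    intro x y d
    have h1 := (hconc x y).dotProduct_mulVec_nonneg d
    have h2 : star d = d := by simp
    rw [h2, Matrix.sub_mulVec, dotProduct_sub, Matrix.smul_mulVec,
      Matrix.one_mulVec, dotProduct_smul, Matrix.neg_mulVec, dotProduct_neg] at h1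
    simp only [smul_eq_mul] at h1
    linarith
  -- first instantiation of the master lemma: χ₁ x = f x (ŷ x)
  obtain ⟨h1d, h1grad, h1fd, h1hess⟩ := master hμ U hf Hxx Hxy Hyx Hyy hxx' hxy' hyx' hyy'
    (fun u v d => hconc' u v d) yhat (fun u => hyhat u)
  -- second instantiation: χ₂ y = -(f (x̂ y) y)
  set g₂ : (Fin n → ℝ) × (Fin m → ℝ) → ℝ := fun q => -(f q.2 q.1) with hg₂def
  have hg₂ : ContDiff ℝ 2 g₂ := (hf.comp (contDiff_snd.prodMk contDiff_fst)).neg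
  have hneg_inner : ∀ (y : Fin n → ℝ) (x' : Fin m → ℝ) (w : Fin m → ℝ),
      fderiv ℝ (fun x'' => -(f x'' y)) x' w = -(fderiv ℝ (fun x'' => f x'' y) x' w) := by
    intro y x' w
    rw [fderiv_fun_neg]
    rfl
  have haa₂ : ∀ (y : Fin n → ℝ) (x : Fin m → ℝ) i j, (-(Hyy x y)) i j
      = D2 g₂ (y, x) (Pi.single i 1, 0) (Pi.single j 1, 0) := by
    intro y x i j
    rw [sp_ff hg₂ y x (Pi.single i 1) (Pi.single j 1) |>.symm]
    have e2 : (fun y' => fderiv ℝ (fun y'' => g₂ (y'', x)) y' (Pi.single j 1))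
        = fun y' => -(fderiv ℝ (fun y'' => f x y'') y' (Pi.single j 1)) := by
      funext y'
      show fderiv ℝ (fun y'' => -(f x y'')) y' (Pi.single j 1) = _
      rw [fderiv_fun_neg]
      rfl
    rw [e2, fderiv_fun_neg]
    simp only [Matrix.neg_apply, ContinuousLinearMap.neg_apply, hHyy]
  have hab₂ : ∀ (y : Fin n → ℝ) (x : Fin m → ℝ) i j, (-(Hyx x y)) i j
      = D2 g₂ (y, x) (Pi.single i 1, 0) (0, Pi.single j 1) := by
    intro y x i j
    rw [sp_fs hg₂ y x (Pi.single i 1) (Pi.single j 1) |>.symm]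
    have e2 : (fun y' => fderiv ℝ (fun x' => g₂ (y', x')) x (Pi.single j 1))
        = fun y' => -(fderiv ℝ (fun x' => f x' y') x (Pi.single j 1)) := by
      funext y'
      show fderiv ℝ (fun x' => -(f x' y')) x (Pi.single j 1) = _
      rw [fderiv_fun_neg]
      rfl
    rw [e2, fderiv_fun_neg]
    simp only [Matrix.neg_apply, ContinuousLinearMap.neg_apply, hHyx]
  have hba₂ : ∀ (y : Fin n → ℝ) (x : Fin m → ℝ) i j, (-(Hxy x y)) i j
      = D2 g₂ (y, x) (0, Pi.single i 1) (Pi.single j 1, 0) := by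
    intro y x i j
    rw [sp_sf hg₂ y x (Pi.single i 1) (Pi.single j 1) |>.symm]
    have e2 : (fun x' => fderiv ℝ (fun y' => g₂ (y', x')) y (Pi.single j 1))
        = fun x' => -(fderiv ℝ (fun y' => f x' y') y (Pi.single j 1)) := by
      funext x'
      show fderiv ℝ (fun y' => -(f x' y')) y (Pi.single j 1) = _
      rw [fderiv_fun_neg]
      rfl
    rw [e2, fderiv_fun_neg]
    simp only [Matrix.neg_apply, ContinuousLinearMap.neg_apply, hHxy]
  have hbb₂ : ∀ (y : Fin n → ℝ) (x : Fin m → ℝ) i j, (-(Hxx x y)) i j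
      = D2 g₂ (y, x) (0, Pi.single i 1) (0, Pi.single j 1) := by
    intro y x i j
    rw [sp_ss hg₂ y x (Pi.single i 1) (Pi.single j 1) |>.symm]
    have e2 : (fun x' => fderiv ℝ (fun x'' => g₂ (y, x'')) x' (Pi.single j 1))
        = fun x' => -(fderiv ℝ (fun x'' => f x'' y) x' (Pi.single j 1)) := by
      funext x'
      show fderiv ℝ (fun x'' => -(f x'' y)) x' (Pi.single j 1) = _
      rw [fderiv_fun_neg]
      rfl
    rw [e2, fderiv_fun_neg]
    simp only [Matrix.neg_apply, ContinuousLinearMap.neg_apply, hHxx]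
  have hneg₂ : ∀ (y : Fin n → ℝ) (x : Fin m → ℝ) (d : Fin m → ℝ),
      d ⬝ᵥ ((-(Hxx x y)) *ᵥ d) ≤ -(μ * (d ⬝ᵥ d)) := by
    intro y x d
    have h1 := hconv' x y d
    rw [Matrix.neg_mulVec, dotProduct_neg]
    linarith
  have hs₂ : ∀ (y : Fin n → ℝ), fderiv ℝ (fun x => g₂ (y, x)) (xhat y) = 0 := by
    intro y
    show fderiv ℝ (fun x => -(f x y)) (xhat y) = 0
    rw [fderiv_fun_neg, hxhat y, neg_zero]
  obtain ⟨h2d, h2grad, h2fd, h2hess⟩ := master hμ g₂ hg₂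
    (fun y x => -(Hyy x y)) (fun y x => -(Hyx x y)) (fun y x => -(Hxy x y))
    (fun y x => -(Hxx x y)) haa₂ hab₂ hba₂ hbb₂ hneg₂ xhat hs₂
  set χ₁ : (Fin m → ℝ) → ℝ := fun x => f x (yhat x) with hχ₁
  set χ₂ : (Fin n → ℝ) → ℝ := fun y => -(f (xhat y) y) with hχ₂
  have hGeq : G = fun p => χ₁ p.1 + χ₂ p.2 := by
    funext p
    obtain ⟨x, y⟩ := p
    rw [hG]
    show f x (yhat x) - f (xhat y) y = f x (yhat x) + -(f (xhat y) y)
    ring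
  have h1d' : Differentiable ℝ χ₁ := h1d
  have h2d' : Differentiable ℝ χ₂ := h2d
  have h1fd' : Differentiable ℝ (fderiv ℝ χ₁) := h1fd
  have h2fd' : Differentiable ℝ (fderiv ℝ χ₂) := h2fd
  -- Part 1: twice differentiability of G
  have part1a : Differentiable ℝ G := by
    rw [hGeq]
    exact (h1d'.comp differentiable_fst).add (h2d'.comp differentiable_snd)
  have hGfd : ∀ p : (Fin m → ℝ) × (Fin n → ℝ), fderiv ℝ G p
      = (fderiv ℝ χ₁ p.1).comp (ContinuousLinearMap.fst ℝ _ _)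
        + (fderiv ℝ χ₂ p.2).comp (ContinuousLinearMap.snd ℝ _ _) := by
    intro p
    have hA : HasFDerivAt (fun q : (Fin m → ℝ) × (Fin n → ℝ) => χ₁ q.1)
        ((fderiv ℝ χ₁ p.1).comp (ContinuousLinearMap.fst ℝ _ _)) p :=
      ((h1d' p.1).hasFDerivAt).comp p hasFDerivAt_fst
    have hB : HasFDerivAt (fun q : (Fin m → ℝ) × (Fin n → ℝ) => χ₂ q.2)
        ((fderiv ℝ χ₂ p.2).comp (ContinuousLinearMap.snd ℝ _ _)) p :=
      ((h2d' p.2).hasFDerivAt).comp p hasFDerivAt_snd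
    rw [hGeq]
    exact (hA.add hB).fderiv
  have part1b : Differentiable ℝ (fderiv ℝ G) := by
    have hfun : fderiv ℝ G = fun p : (Fin m → ℝ) × (Fin n → ℝ) =>
        ((ContinuousLinearMap.compL ℝ ((Fin m → ℝ) × (Fin n → ℝ)) (Fin m → ℝ) ℝ).flip
          (ContinuousLinearMap.fst ℝ _ _)) (fderiv ℝ χ₁ p.1)
        + ((ContinuousLinearMap.compL ℝ ((Fin m → ℝ) × (Fin n → ℝ)) (Fin n → ℝ) ℝ).flip
          (ContinuousLinearMap.snd ℝ _ _)) (fderiv ℝ χ₂ p.2) := by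
      funext p
      rw [hGfd p]
      rfl
    rw [hfun]
    have c1 : Differentiable ℝ ((ContinuousLinearMap.compL ℝ ((Fin m → ℝ) × (Fin n → ℝ))
        (Fin m → ℝ) ℝ).flip (ContinuousLinearMap.fst ℝ (Fin m → ℝ) (Fin n → ℝ))) :=
      ContinuousLinearMap.differentiable _
    have c2 : Differentiable ℝ ((ContinuousLinearMap.compL ℝ ((Fin m → ℝ) × (Fin n → ℝ))
        (Fin n → ℝ) ℝ).flip (ContinuousLinearMap.snd ℝ (Fin m → ℝ) (Fin n → ℝ))) :=
      ContinuousLinearMap.differentiable _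
    exact (c1.comp (h1fd'.comp differentiable_fst)).add
      (c2.comp (h2fd'.comp differentiable_snd))
  -- Part 2: the x–x block
  have part2 : ∀ x y i j,
      fderiv ℝ (fun x' => fderiv ℝ (fun x'' => G (x'', y)) x' (Pi.single j 1)) x (Pi.single i 1)
        = Gxx x (yhat x) i j := by
    intro x y i j
    have hfun : (fun x' => fderiv ℝ (fun x'' => G (x'', y)) x' (Pi.single j 1))
        = fun x' => fderiv ℝ χ₁ x' (Pi.single j 1) := by
      funext x'
      have : (fun x'' => G (x'', y)) = fun x'' => χ₁ x'' + χ₂ y := by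
        funext x''
        rw [hGeq]
      rw [this, fderiv_add_const]
    rw [hfun, h1hess x i j, hGxx]
  -- Part 3
  have part3 : ∀ (x : Fin m → ℝ) (y : Fin n → ℝ) (i : Fin n) (j : Fin m),
      fderiv ℝ (fun y' => fderiv ℝ (fun x' => G (x', y')) x (Pi.single j 1)) y (Pi.single i 1)
        = 0 := by
    intro x y i j
    have hfun : (fun y' => fderiv ℝ (fun x' => G (x', y')) x (Pi.single j 1))
        = fun _ => fderiv ℝ χ₁ x (Pi.single j 1) := by
      funext y'
      have : (fun x' => G (x', y')) = fun x' => χ₁ x' + χ₂ y' := by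
        funext x'
        rw [hGeq]
      rw [this, fderiv_add_const]
    rw [hfun, fderiv_fun_const]
    rfl
  -- Part 4
  have part4 : ∀ (x : Fin m → ℝ) (y : Fin n → ℝ) (i : Fin m) (j : Fin n),
      fderiv ℝ (fun x' => fderiv ℝ (fun y' => G (x', y')) y (Pi.single j 1)) x (Pi.single i 1)
        = 0 := by
    intro x y i j
    have hfun : (fun x' => fderiv ℝ (fun y' => G (x', y')) y (Pi.single j 1))
        = fun _ => fderiv ℝ χ₂ y (Pi.single j 1) := by
      funext x'
      have : (fun y' => G (x', y')) = fun y' => χ₁ x' + χ₂ y' := by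
        funext y'
        rw [hGeq]
      rw [this, fderiv_const_add]
    rw [hfun, fderiv_fun_const]
    rfl
  -- Part 5: the y–y block
  have part5 : ∀ x y i j,
      fderiv ℝ (fun y' => fderiv ℝ (fun y'' => G (x, y'')) y' (Pi.single j 1)) y (Pi.single i 1)
        = Gyy (xhat y) y i j := by
    intro x y i j
    have hfun : (fun y' => fderiv ℝ (fun y'' => G (x, y'')) y' (Pi.single j 1))
        = fun y' => fderiv ℝ χ₂ y' (Pi.single j 1) := by
      funext y'
      have : (fun y'' => G (x, y'')) = fun y'' => χ₁ x + χ₂ y'' := by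
        funext y''
        rw [hGeq]
      rw [this, fderiv_const_add]
    rw [hfun, h2hess y i j, hGyy]
    congr 1
    · rw [neg_neg]
      congr 1
      rw [Matrix.neg_mul, Matrix.mul_neg, Matrix.neg_mul, neg_neg]
  -- Part 6: symmetry and positivity
  have part6 : ∀ x y, (Gxx x y).IsSymm ∧ (Gyy x y).IsSymm ∧
      (Gxx x y - μ • (1 : Matrix (Fin m) (Fin m) ℝ)).PosSemidef ∧
      (Gyy x y - μ • (1 : Matrix (Fin n) (Fin n) ℝ)).PosSemidef := by
    intro x y
    have hsymxx : (Hxx x y)ᵀ = Hxx x y := by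
      ext i j
      rw [Matrix.transpose_apply, hxx', hxx', D2_symm hf]
    have hsymyy : (Hyy x y)ᵀ = Hyy x y := by
      ext i j
      rw [Matrix.transpose_apply, hyy', hyy', D2_symm hf]
    have hxyyx : (Hxy x y)ᵀ = Hyx x y := by
      ext i j
      rw [Matrix.transpose_apply, hxy', hyx', D2_symm hf]
    have hyxxy : (Hyx x y)ᵀ = Hxy x y := by
      rw [← hxyyx, Matrix.transpose_transpose]
    have hermxx : (Hxx x y).IsHermitian := by
      show (Hxx x y)ᴴ = Hxx x y
      rw [show (Hxx x y)ᴴ = (Hxx x y)ᵀ from by ext i j; simp [Matrix.conjTranspose_apply],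
        hsymxx]
    have hermnyy : (-(Hyy x y)).IsHermitian := by
      show (-(Hyy x y))ᴴ = -(Hyy x y)
      rw [show (-(Hyy x y))ᴴ = (-(Hyy x y))ᵀ from by ext i j; simp [Matrix.conjTranspose_apply],
        Matrix.transpose_neg, hsymyy]
    have hpdxx : (Hxx x y).PosDef := by
      refine Matrix.PosDef.of_dotProduct_mulVec_pos hermxx (fun d hd => ?_)
      have h1 := hconv' x y d
      have h2 : (0:ℝ) < d ⬝ᵥ d := dot_pos d hd
      have h3 : star d = d := by simp
      rw [h3]
      nlinarith
    have hpdnyy : (-(Hyy x y)).PosDef := by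
      refine Matrix.PosDef.of_dotProduct_mulVec_pos hermnyy (fun d hd => ?_)
      have h1 := hconc' x y d
      have h2 : (0:ℝ) < d ⬝ᵥ d := dot_pos d hd
      have h3 : star d = d := by simp
      rw [h3, Matrix.neg_mulVec, dotProduct_neg]
      nlinarith
    have hinvsymyy : ((-(Hyy x y))⁻¹)ᵀ = (-(Hyy x y))⁻¹ := by
      rw [Matrix.transpose_nonsing_inv, Matrix.transpose_neg, hsymyy]
    have hinvsymxx : ((Hxx x y)⁻¹)ᵀ = (Hxx x y)⁻¹ := by
      rw [Matrix.transpose_nonsing_inv, hsymxx]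
    have hconjxy : (Hxy x y)ᴴ = Hyx x y := by
      rw [show (Hxy x y)ᴴ = (Hxy x y)ᵀ from by ext i j; simp [Matrix.conjTranspose_apply],
        hxyyx]
    have hconjyx : (Hyx x y)ᴴ = Hxy x y := by
      rw [show (Hyx x y)ᴴ = (Hyx x y)ᵀ from by ext i j; simp [Matrix.conjTranspose_apply],
        hyxxy]
    have hpsd1 : (Hxy x y * (-(Hyy x y))⁻¹ * Hyx x y).PosSemidef := by
      have := (hpdnyy.inv).posSemidef.mul_mul_conjTranspose_same (Hxy x y)
      rwa [hconjxy] at this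
    have hpsd2 : (Hyx x y * (Hxx x y)⁻¹ * Hxy x y).PosSemidef := by
      have := (hpdxx.inv).posSemidef.mul_mul_conjTranspose_same (Hyx x y)
      rwa [hconjyx] at this
    refine ⟨?_, ?_, ?_, ?_⟩
    · show (Gxx x y)ᵀ = Gxx x y
      rw [hGxx, Matrix.transpose_add, Matrix.transpose_mul, Matrix.transpose_mul,
        hsymxx, hinvsymyy, hxyyx, hyxxy, ← Matrix.mul_assoc]
    · show (Gyy x y)ᵀ = Gyy x y
      rw [hGyy, Matrix.transpose_add, Matrix.transpose_neg, Matrix.transpose_mul,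
        Matrix.transpose_mul, hsymyy, hinvsymxx, hxyyx, hyxxy, ← Matrix.mul_assoc]
    · have : Gxx x y - μ • (1 : Matrix (Fin m) (Fin m) ℝ)
          = (Hxx x y - μ • 1) + Hxy x y * (-(Hyy x y))⁻¹ * Hyx x y := by
        rw [hGxx]
        abel
      rw [this]
      exact (hconv x y).add hpsd1
    · have : Gyy x y - μ • (1 : Matrix (Fin n) (Fin n) ℝ)
          = (-(Hyy x y) - μ • 1) + Hyx x y * (Hxx x y)⁻¹ * Hxy x y := by
        rw [hGyy]
        abel
      rw [this]
      exact (hconc x y).add hpsd2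
  exact ⟨⟨part1a, part1b⟩, part2, part3, part4, part5, part6⟩
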